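/- For any measurable symmetric h : [0,1]² → [0,1], the triangle density satisfies 0 ≤ t(h) ≤ 1, and, writing e(h) = ∫∫ h, the Kruskal–Katona-type upper bound t(h) ≤ e(h)^{3/2} holds. -/

import Mathlib

open MeasureTheory Set
open scoped ENNReal

noncomputable def KKmu : Measure ℝ := volume.restrict (Set.Icc 0 1)

instance : IsProbabilityMeasure KKmu := by
  constructor
  simp [KKmu, Measure.restrict_apply, Real.volume_Icc]

/-- The core inequality at the `lintegral` level, for an arbitrary probability measure. -/
theorem kk_ennreal {α : Type*} [MeasurableSpace α] (μ : Measure α) [IsProbabilityMeasure μ]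
    (H : α → α → ℝ≥0∞) (Hmeas : Measurable (Function.uncurry H))
    (Hle : ∀ x y, H x y ≤ 1) (Hsymm : ∀ x y, H x y = H y x) :
    (∫⁻ x, ∫⁻ y, ∫⁻ z, H x y * H y z * H z x ∂μ ∂μ ∂μ)
      ≤ (∫⁻ x, ∫⁻ y, H x y ∂μ ∂μ) ^ ((3:ℝ)/2) := by
  have hH : Measurable fun p : α × α => H p.1 p.2 := Hmeas
  -- degree-squared function and path kernel
  set g : α → ℝ≥0∞ := fun x => ∫⁻ y, H x y ^ (2:ℝ) ∂μ with hgdef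
  set f : α → α → ℝ≥0∞ := fun x z => ∫⁻ y, H x y * H y z ∂μ with hfdef
  set E2 : ℝ≥0∞ := ∫⁻ x, g x ∂μ with hE2def
  have hconj : Real.HolderConjugate 2 2 := Real.HolderConjugate.two_two
  have hgm : Measurable g := by
    apply Measurable.lintegral_prod_right (f := fun x y => H x y ^ (2:ℝ))
    exact hH.pow_const _
  have hfm : Measurable fun p : α × α => f p.1 p.2 := by
    apply Measurable.lintegral_prod_right (f := fun (p : α × α) y => H p.1 y * H y p.2)
    exact (hH.comp (measurable_fst.fst.prodMk measurable_snd)).mul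
      (hH.comp (measurable_snd.prodMk measurable_fst.snd))
  -- Step A : rewrite the triple integral
  have stepA : (∫⁻ x, ∫⁻ y, ∫⁻ z, H x y * H y z * H z x ∂μ ∂μ ∂μ)
      = ∫⁻ p, H p.1 p.2 * f p.1 p.2 ∂(μ.prod μ) := by
    rw [lintegral_prod (fun p : α × α => H p.1 p.2 * f p.1 p.2) ((hH.mul hfm).aemeasurable)]
    refine lintegral_congr fun x => ?_
    have hswap : (∫⁻ y, ∫⁻ z, H x y * H y z * H z x ∂μ ∂μ)
        = ∫⁻ z, ∫⁻ y, H x y * H y z * H z x ∂μ ∂μ := by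
      apply lintegral_lintegral_swap
      exact ((hH.comp (measurable_const.prodMk measurable_fst)).mul hH).mul
        ((hH.comp (measurable_snd.prodMk measurable_const))) |>.aemeasurable
    rw [hswap]
    refine lintegral_congr fun z => ?_
    have : (∫⁻ y, H x y * H y z * H z x ∂μ) = (∫⁻ y, H x y * H y z ∂μ) * H z x := by
      rw [← lintegral_mul_const]
      exact (hH.comp (measurable_const.prodMk measurable_id)).mul
        (hH.comp (measurable_id.prodMk measurable_const))
    rw [this, mul_comm, Hsymm z x]
  -- Step B : Cauchy–Schwarz on the product measure
  have stepB : (∫⁻ p, H p.1 p.2 * f p.1 p.2 ∂(μ.prod μ))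
      ≤ (∫⁻ p, H p.1 p.2 ^ (2:ℝ) ∂(μ.prod μ)) ^ ((1:ℝ)/2)
        * (∫⁻ p, f p.1 p.2 ^ (2:ℝ) ∂(μ.prod μ)) ^ ((1:ℝ)/2) := by
    exact ENNReal.lintegral_mul_le_Lp_mul_Lq (μ.prod μ) hconj hH.aemeasurable hfm.aemeasurable
  -- pointwise bound on f
  have stepC : ∀ x z, f x z ^ (2:ℝ) ≤ g x * g z := by
    intro x z
    have hle : f x z ≤ g x ^ ((1:ℝ)/2) * g z ^ ((1:ℝ)/2) := by
      have := ENNReal.lintegral_mul_le_Lp_mul_Lq μ hconj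
        (f := fun y => H x y) (g := fun y => H y z)
        (hH.comp (measurable_const.prodMk measurable_id)).aemeasurable
        (hH.comp (measurable_id.prodMk measurable_const)).aemeasurable
      calc f x z ≤ (∫⁻ y, H x y ^ (2:ℝ) ∂μ) ^ ((1:ℝ)/2)
            * (∫⁻ y, H y z ^ (2:ℝ) ∂μ) ^ ((1:ℝ)/2) := this
        _ = g x ^ ((1:ℝ)/2) * g z ^ ((1:ℝ)/2) := by
            congr 2
            exact lintegral_congr fun y => by rw [Hsymm y z]
    calc f x z ^ (2:ℝ) ≤ (g x ^ ((1:ℝ)/2) * g z ^ ((1:ℝ)/2)) ^ (2:ℝ) :=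
          ENNReal.rpow_le_rpow hle (by norm_num)
      _ = g x * g z := by
          rw [ENNReal.mul_rpow_of_nonneg _ _ (by norm_num), ← ENNReal.rpow_mul,
            ← ENNReal.rpow_mul]
          norm_num
  -- integrate stepC
  have stepC' : (∫⁻ p, f p.1 p.2 ^ (2:ℝ) ∂(μ.prod μ)) ≤ E2 * E2 := by
    calc (∫⁻ p, f p.1 p.2 ^ (2:ℝ) ∂(μ.prod μ))
        ≤ ∫⁻ p, g p.1 * g p.2 ∂(μ.prod μ) := lintegral_mono fun p => stepC p.1 p.2
      _ = E2 * E2 := lintegral_prod_mul hgm.aemeasurable hgm.aemeasurable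
  have hHsq : (∫⁻ p, H p.1 p.2 ^ (2:ℝ) ∂(μ.prod μ)) = E2 := by
    rw [hE2def, lintegral_prod _ ((hH.pow_const _).aemeasurable)]
  -- combine
  have hT : (∫⁻ x, ∫⁻ y, ∫⁻ z, H x y * H y z * H z x ∂μ ∂μ ∂μ) ≤ E2 ^ ((3:ℝ)/2) := by
    rw [stepA]
    refine le_trans stepB ?_
    rw [hHsq]
    calc E2 ^ ((1:ℝ)/2) * (∫⁻ p, f p.1 p.2 ^ (2:ℝ) ∂(μ.prod μ)) ^ ((1:ℝ)/2)
        ≤ E2 ^ ((1:ℝ)/2) * (E2 * E2) ^ ((1:ℝ)/2) := by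
          gcongr
      _ = E2 ^ ((3:ℝ)/2) := by
          rw [ENNReal.mul_rpow_of_nonneg _ _ (by norm_num), ← ENNReal.rpow_add_of_nonneg,
            ← ENNReal.rpow_add_of_nonneg] <;> norm_num
  -- E2 ≤ E
  refine hT.trans (ENNReal.rpow_le_rpow ?_ (by norm_num))
  refine lintegral_mono fun x => lintegral_mono fun y => ?_
  calc H x y ^ (2:ℝ) ≤ H x y ^ (1:ℝ) :=
        ENNReal.rpow_le_rpow_of_exponent_ge (Hle x y) (by norm_num) -- maybe needs x≤1 form
    _ = H x y := ENNReal.rpow_one _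

/-- Triangle density bounds and the Kruskal–Katona inequality for graphons:
`0 ≤ t(h) ≤ 1` and `t(h) ≤ e(h)^(3/2)`. -/
theorem kruskal_katona_graphon (h : ℝ → ℝ → ℝ)
    (hmeas : Measurable (Function.uncurry h))
    (hrange : ∀ x y, h x y ∈ Set.Icc (0:ℝ) 1)
    (hsymm : ∀ x y, h x y = h y x) :
    let eDen : ℝ := ∫ p in (Set.Icc (0:ℝ) 1 ×ˢ Set.Icc (0:ℝ) 1), h p.1 p.2
    let tDen : ℝ := ∫ p in (Set.Icc (0:ℝ) 1 ×ˢ Set.Icc (0:ℝ) 1 ×ˢ Set.Icc (0:ℝ) 1),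
        h p.1 p.2.1 * h p.2.1 p.2.2 * h p.2.2 p.1
    0 ≤ tDen ∧ tDen ≤ 1 ∧ tDen ≤ eDen ^ ((3:ℝ)/2) := by
  intro eDen tDen
  have h0 : ∀ x y, 0 ≤ h x y := fun x y => (hrange x y).1
  have h1 : ∀ x y, h x y ≤ 1 := fun x y => (hrange x y).2
  set I := Set.Icc (0:ℝ) 1 with hI
  set H : ℝ → ℝ → ℝ≥0∞ := fun x y => ENNReal.ofReal (h x y) with hHdef
  have HmeasU : Measurable (Function.uncurry H) := ENNReal.measurable_ofReal.comp hmeas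
  have hH : Measurable fun p : ℝ × ℝ => H p.1 p.2 := HmeasU
  have Hle : ∀ x y, H x y ≤ 1 := fun x y => ENNReal.ofReal_le_one.mpr (h1 x y)
  have Hsymm : ∀ x y, H x y = H y x := fun x y => by simp only [hHdef, hsymm x y]
  -- measure identifications
  have hvol2 : (volume : Measure (ℝ × ℝ)).restrict (I ×ˢ I) = KKmu.prod KKmu := by
    rw [KKmu, Measure.prod_restrict, ← Measure.volume_eq_prod]
  have hvol3 : (volume : Measure (ℝ × ℝ × ℝ)).restrict (I ×ˢ I ×ˢ I)
      = KKmu.prod (KKmu.prod KKmu) := by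
    rw [KKmu, Measure.prod_restrict, Measure.prod_restrict, ← Measure.volume_eq_prod,
      ← Measure.volume_eq_prod]
  set E : ℝ≥0∞ := ∫⁻ x, ∫⁻ y, H x y ∂KKmu ∂KKmu with hEdef
  set T : ℝ≥0∞ := ∫⁻ x, ∫⁻ y, ∫⁻ z, H x y * H y z * H z x ∂KKmu ∂KKmu ∂KKmu with hTdef
  -- measurability of the triple integrand
  have hF3 : Measurable fun p : ℝ × ℝ × ℝ => h p.1 p.2.1 * h p.2.1 p.2.2 * h p.2.2 p.1 :=
    ((hmeas.comp (measurable_fst.prodMk measurable_snd.fst)).mul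
      (hmeas.comp (measurable_snd.fst.prodMk measurable_snd.snd))).mul
      (hmeas.comp (measurable_snd.snd.prodMk measurable_fst))
  have hG3 : Measurable fun p : ℝ × ℝ × ℝ => H p.1 p.2.1 * H p.2.1 p.2.2 * H p.2.2 p.1 :=
    ((hH.comp (measurable_fst.prodMk measurable_snd.fst)).mul
      (hH.comp (measurable_snd.fst.prodMk measurable_snd.snd))).mul
      (hH.comp (measurable_snd.snd.prodMk measurable_fst))
  -- tDen = T.toReal
  have htT : tDen = T.toReal := by
    have h1' : tDen = ∫ p in (I ×ˢ I ×ˢ I),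
        h p.1 p.2.1 * h p.2.1 p.2.2 * h p.2.2 p.1 := rfl
    rw [h1', integral_eq_lintegral_of_nonneg_ae
      (Filter.Eventually.of_forall fun p : ℝ × ℝ × ℝ => mul_nonneg (mul_nonneg (h0 _ _) (h0 _ _)) (h0 _ _))
      (hF3.aestronglyMeasurable)]
    congr 1
    rw [hvol3, lintegral_prod _ (by
      exact ((ENNReal.measurable_ofReal.comp hF3)).aemeasurable)]
    rw [hTdef]
    refine lintegral_congr fun x => ?_
    rw [lintegral_prod _ (by
      exact (ENNReal.measurable_ofReal.comp
        (hF3.comp (measurable_const.prodMk measurable_id))).aemeasurable)]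
    refine lintegral_congr fun y => lintegral_congr fun z => ?_
    simp only [hHdef]
    rw [ENNReal.ofReal_mul (mul_nonneg (h0 _ _) (h0 _ _)), ENNReal.ofReal_mul (h0 x y)]
  -- eDen = E.toReal
  have heE : eDen = E.toReal := by
    have h1' : eDen = ∫ p in (I ×ˢ I), h p.1 p.2 := rfl
    rw [h1', integral_eq_lintegral_of_nonneg_ae
      (Filter.Eventually.of_forall fun p : ℝ × ℝ => h0 p.1 p.2)
      ((hmeas.comp (measurable_fst.prodMk measurable_snd)).aestronglyMeasurable)]
    congr 1
    rw [hvol2, hEdef, lintegral_prod _ hH.aemeasurable]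
  -- bounds on T and E
  have hT1 : T ≤ 1 := by
    rw [hTdef]
    calc (∫⁻ x, ∫⁻ y, ∫⁻ z, H x y * H y z * H z x ∂KKmu ∂KKmu ∂KKmu)
        ≤ ∫⁻ _x, ∫⁻ _y, ∫⁻ _z, 1 ∂KKmu ∂KKmu ∂KKmu := by
          refine lintegral_mono fun x => lintegral_mono fun y => lintegral_mono fun z => ?_
          exact mul_le_one' (mul_le_one' (Hle x y) (Hle y z)) (Hle z x)
      _ = 1 := by simp
  have hE1 : E ≤ 1 := by
    rw [hEdef]
    calc (∫⁻ x, ∫⁻ y, H x y ∂KKmu ∂KKmu) ≤ ∫⁻ _x, ∫⁻ _y, 1 ∂KKmu ∂KKmu :=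
          lintegral_mono fun x => lintegral_mono fun y => Hle x y
      _ = 1 := by simp
  have hKK : T ≤ E ^ ((3:ℝ)/2) := kk_ennreal KKmu H HmeasU Hle Hsymm
  refine ⟨htT ▸ ENNReal.toReal_nonneg, ?_, ?_⟩
  · rw [htT]
    calc T.toReal ≤ (1 : ℝ≥0∞).toReal := ENNReal.toReal_mono (by simp) hT1
      _ = 1 := by simp
  · rw [htT, heE, ENNReal.toReal_rpow]
    refine ENNReal.toReal_mono ?_ hKK
    exact ENNReal.rpow_ne_top_of_nonneg (by norm_num) (by
      exact ne_top_of_le_ne_top (by simp) hE1)
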